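/- Let (E,d) be a metric space, μ a finite Borel measure on E, A ⊆ E a Borel set, and 0 < t < ∞. Suppose that for every x ∈ A, the generalized upper density Θ̃^1(μ,x) := lim_{δ→0⁺} sup{ μ(C)/diam C : x ∈ C ⊆ E, C closed, 0 < diam C < δ } satisfies Θ̃^1(μ,x) ≥ t. Then μ(A) ≥ t · H^1(A). -/

import Mathlib

set_option maxHeartbeats 1000000


universe uX

open MeasureTheory ENNReal NNReal Set Filter

/-- Auxiliary: to bound `μH[1] s`, it suffices to produce, for every scale `r > 0`,
a countable cover of `s` by sets of diameter `≤ r` whose diameters sum to at most `L`. -/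
lemma hausdorff_le_of_covers {X : Type uX} [EMetricSpace X] [MeasurableSpace X] [BorelSpace X]
    (s : Set X) (L : ℝ≥0∞)
    (H : ∀ r : ℝ≥0∞, 0 < r → ∃ (ι : Type uX) (_ : Encodable ι) (c : ι → Set X),
      s ⊆ ⋃ i, c i ∧ (∀ i, EMetric.diam (c i) ≤ r) ∧ ∑' i, EMetric.diam (c i) ≤ L) :
    μH[1] s ≤ L := by
  rw [Measure.hausdorffMeasure_apply]
  refine iSup₂_le fun r hr => ?_
  obtain ⟨ι, hι, c, hcov, hdiam, hsum⟩ := H r hr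
  letI := hι
  set u' : ℕ → Set X := fun j => ⋃ b ∈ Encodable.decode₂ ι j, c b with hu'
  refine iInf₂_le_of_le u' (by rwa [Encodable.iUnion_decode₂]) ?_
  refine iInf_le_of_le (fun j => ?_) ?_
  · rw [EMetric.diam_iUnion_mem_option]
    exact iSup₂_le fun _ _ => hdiam _
  · calc (∑' j : ℕ, ⨆ _ : (u' j).Nonempty, EMetric.diam (u' j) ^ (1 : ℝ))
        = ∑' i : ι, ⨆ _ : (c i).Nonempty, EMetric.diam (c i) ^ (1 : ℝ) :=
          tsum_iUnion_decode₂ (fun t : Set X => ⨆ _ : t.Nonempty, EMetric.diam t ^ (1 : ℝ))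
            (by simp) _
      _ ≤ ∑' i, EMetric.diam (c i) := by
          refine ENNReal.tsum_le_tsum fun i => ?_
          exact iSup_le fun _ => by simp
      _ ≤ L := hsum

theorem stmt_2 {E : Type*} [MetricSpace E] [MeasurableSpace E] [BorelSpace E]
    (μ : Measure E) [IsFiniteMeasure μ] (A : Set E) (hA : MeasurableSet A)
    (t : ℝ≥0∞) (ht0 : 0 < t) (htop : t ≠ ⊤)
    (h : ∀ x ∈ A,
      t ≤ ⨅ (δ : ℝ≥0∞) (_ : 0 < δ),
        ⨆ (C : Set E) (_ : IsClosed C ∧ x ∈ C ∧ 0 < EMetric.diam C ∧ EMetric.diam C < δ),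
          μ C / EMetric.diam C) :
    t * μH[1] A ≤ μ A := by
  classical
  have hμA : μ A ≠ ∞ := measure_ne_top μ A
  -- Main quantitative estimate
  have key : ∀ t' : ℝ≥0∞, 0 < t' → t' < t → ∀ ε : ℝ≥0∞, 0 < ε →
      μH[1] A ≤ (μ A + ε) / t' := by
    intro t' ht'0 ht't ε hε
    have ht'top : t' ≠ ∞ := (ht't.trans (lt_top_iff_ne_top.2 htop)).ne
    have hε2 : (0 : ℝ≥0∞) < ε / 2 := ENNReal.half_pos hε.ne'
    obtain ⟨U, hAU, hUopen, hUμ⟩ := Set.exists_isOpen_lt_of_lt A (μ A + ε / 2)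
      (ENNReal.lt_add_right hμA hε2.ne')
    have hμU : μ U ≠ ∞ := measure_ne_top μ U
    refine hausdorff_le_of_covers A _ (fun r hr => ?_)
    -- the scale of the fine covers
    set δ : ℝ≥0∞ := min (r / 5) 1 with hδdef
    have hδpos : 0 < δ := lt_min (ENNReal.div_pos hr.ne' (by norm_num)) zero_lt_one
    have hδ1 : δ ≤ 1 := min_le_right _ _
    have h5δ : 5 * δ ≤ r := by
      calc (5 : ℝ≥0∞) * δ ≤ 5 * (r / 5) := by gcongr; exact min_le_left _ _
        _ ≤ r := ENNReal.mul_div_le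
    -- the Vitali family
    set F : Set (Set E) := {C | IsClosed C ∧ C ⊆ U ∧ 0 < EMetric.diam C ∧
      EMetric.diam C < δ ∧ t' * EMetric.diam C ≤ μ C} with hF
    -- fineness of the family
    have hfine : ∀ x ∈ A, ∀ V : Set E, IsOpen V → x ∈ V → V ⊆ U →
        ∃ C, C ∈ F ∧ x ∈ C ∧ C ⊆ V := by
      intro x hxA V hV hxV hVU
      obtain ⟨ρ, hρpos, hρ⟩ := EMetric.mem_nhds_iff.1 (hV.mem_nhds hxV)
      set δ' : ℝ≥0∞ := min δ ρ with hδ'def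
      have hδ'pos : 0 < δ' := lt_min hδpos hρpos
      have h1 : t ≤ ⨆ (C : Set E) (_ : IsClosed C ∧ x ∈ C ∧ 0 < EMetric.diam C ∧
          EMetric.diam C < δ'), μ C / EMetric.diam C :=
        le_trans (h x hxA) (iInf₂_le δ' hδ'pos)
      have h2 := ht't.trans_le h1
      rw [lt_iSup_iff] at h2
      obtain ⟨C, hC2⟩ := h2
      rw [lt_iSup_iff] at hC2
      obtain ⟨⟨hCclosed, hxC, hCd0, hCdδ'⟩, hlt⟩ := hC2
      have hCdtop : EMetric.diam C ≠ ∞ :=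
        (hCdδ'.trans_le ((min_le_left _ _).trans (hδ1.trans le_top))).ne
      have hmub : t' * EMetric.diam C ≤ μ C := by
        rw [ENNReal.lt_div_iff_mul_lt (Or.inl hCd0.ne') (Or.inl hCdtop)] at hlt
        exact hlt.le
      have hCV : C ⊆ V := by
        intro y hy
        apply hρ
        have hyx : edist y x ≤ EMetric.diam C := EMetric.edist_le_diam_of_mem hy hxC
        exact EMetric.mem_ball.2 (hyx.trans_lt (hCdδ'.trans_le (min_le_right _ _)))
      exact ⟨C, ⟨hCclosed, hCV.trans hVU, hCd0, hCdδ'.trans_le (min_le_left _ _), hmub⟩,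
        hxC, hCV⟩
    -- Vitali covering lemma
    obtain ⟨u, huF, hudisj, hu⟩ :=
      Vitali.exists_disjoint_subfamily_covering_enlargement (id : Set E → Set E) F
        (fun C => (EMetric.diam C).toReal) 2 one_lt_two
        (fun C _ => ENNReal.toReal_nonneg) 1
        (fun C hC => by
          have h1 : EMetric.diam C ≤ 1 := hC.2.2.2.1.le.trans hδ1
          simpa using ENNReal.toReal_mono one_ne_top h1)
        (fun C hC => by
          rcases EMetric.diam_pos_iff.1 hC.2.2.1 with ⟨x, hx, -⟩
          exact ⟨x, hx⟩)
    -- countability of the disjoint subfamily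
    have hpos : ∀ b : ↥u, 0 < μ (b : Set E) := fun b =>
      lt_of_lt_of_le (ENNReal.mul_pos ht'0.ne' (huF b.2).2.2.1.ne') (huF b.2).2.2.2.2
    have hucount : u.Countable := by
      have hmble : ∀ b : ↥u, MeasurableSet (b : Set E) := fun b => (huF b.2).1.measurableSet
      have hdisj : Pairwise (Function.onFun Disjoint fun b : ↥u => (b : Set E)) := by
        intro i j hij
        exact hudisj i.2 j.2 (fun hw => hij (Subtype.ext hw))
      have hcnt := MeasureTheory.Measure.countable_meas_pos_of_disjoint_iUnion
        (μ := μ) hmble hdisj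
      have heq : {i : ↥u | 0 < μ ((fun b : ↥u => (b : Set E)) i)} = Set.univ :=
        Set.eq_univ_of_forall fun b => hpos b
      rw [heq] at hcnt
      have : Countable ↥u := Set.countable_univ_iff.1 hcnt
      exact Set.countable_coe_iff.1 this
    haveI : Countable ↥u := hucount.to_subtype
    -- the sum of diameters is controlled
    have hsU : ⋃₀ u ⊆ U := fun x ⟨C, hC, hxC⟩ => (huF hC).2.1 hxC
    have hmeasU : μ (⋃₀ u) = ∑' b : ↥u, μ (b : Set E) :=
      measure_sUnion hucount hudisj (fun b hb => (huF hb).1.measurableSet)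
    have hSsum : ∑' b : ↥u, EMetric.diam (b : Set E) ≤ μ U / t' := by
      have h1 : ∀ b : ↥u, EMetric.diam (b : Set E) ≤ μ (b : Set E) / t' := fun b => by
        rw [ENNReal.le_div_iff_mul_le (Or.inl ht'0.ne') (Or.inl ht'top), mul_comm]
        exact (huF b.2).2.2.2.2
      calc ∑' b : ↥u, EMetric.diam (b : Set E) ≤ ∑' b : ↥u, μ (b : Set E) / t' :=
            ENNReal.tsum_le_tsum h1
        _ = (∑' b : ↥u, μ (b : Set E)) / t' := by
            simp only [div_eq_mul_inv, ENNReal.tsum_mul_right]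
        _ ≤ μ U / t' := by
            rw [← hmeasU]
            gcongr
    have hSne : ∑' b : ↥u, EMetric.diam (b : Set E) ≠ ∞ :=
      (hSsum.trans_lt (ENNReal.div_lt_top hμU ht'0.ne')).ne
    -- choose a finite subfamily with small tail
    set ε₀ : ℝ≥0∞ := ε / 2 / t' / 4 with hε₀def
    have hε₀pos : 0 < ε₀ :=
      ENNReal.div_pos (ENNReal.div_pos hε2.ne' ht'top).ne' (ENNReal.ofNat_ne_top)
    obtain ⟨v, hv⟩ : ∃ v : Finset ↥u,
        ∑' b : {x : ↥u // x ∉ v}, EMetric.diam (((b : ↥u) : Set E)) < ε₀ :=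
      ((ENNReal.tendsto_tsum_compl_atTop_zero hSne).eventually_lt_const hε₀pos).exists
    -- the cover
    set c : ↥u → Set E := fun b => if b ∈ v then (b : Set E)
      else Metric.cthickening ((2 * (EMetric.diam (b : Set E)).toNNReal : ℝ≥0) : ℝ) (b : Set E)
      with hc
    have hdiamb : ∀ b : ↥u, EMetric.diam (b : Set E) < δ := fun b => (huF b.2).2.2.2.1
    have hdiambtop : ∀ b : ↥u, EMetric.diam (b : Set E) ≠ ∞ := fun b =>
      ((hdiamb b).trans_le (hδ1.trans le_top)).ne
    refine ⟨↥u, Encodable.ofCountable _, c, ?_, ?_, ?_⟩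
    · -- coverage
      intro x hx
      by_cases hx' : ∃ b ∈ v, x ∈ ((b : ↥u) : Set E)
      · obtain ⟨b, hbv, hxb⟩ := hx'
        exact Set.mem_iUnion.2 ⟨b, by simp only [hc, if_pos hbv]; exact hxb⟩
      · push_neg at hx'
        set K : Set E := ⋃ b ∈ v, ((b : ↥u) : Set E) with hKdef
        have hKclosed : IsClosed K := by
          apply Set.Finite.isClosed_biUnion v.finite_toSet
          exact fun b _ => (huF b.2).1
        have hxUK : x ∈ U \ K := by
          refine ⟨hAU hx, ?_⟩
          simp only [hKdef, Set.mem_iUnion]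
          rintro ⟨b, hbv, hxb⟩
          exact hx' b hbv hxb
        obtain ⟨C, hCF, hxC, hCV⟩ := hfine x hx (U \ K) (hUopen.sdiff hKclosed) hxUK
          Set.diff_subset
        obtain ⟨b, hbu, hinter, hle⟩ := hu C hCF
        obtain ⟨z, hzC, hzb⟩ := hinter
        have hbv : (⟨b, hbu⟩ : ↥u) ∉ v := by
          intro hbv
          have hzK : z ∈ K := Set.mem_biUnion hbv hzb
          exact (hCV hzC).2 hzK
        refine Set.mem_iUnion.2 ⟨⟨b, hbu⟩, ?_⟩
        simp only [hc, if_neg hbv]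
        rw [Metric.mem_cthickening_iff, ENNReal.ofReal_coe_nnreal]
        have hCtop : EMetric.diam C ≠ ∞ := (hCF.2.2.2.1.trans_le (hδ1.trans le_top)).ne
        have h1 : EMetric.infEdist x b ≤ EMetric.diam C :=
          (EMetric.infEdist_le_edist_of_mem hzb).trans (EMetric.edist_le_diam_of_mem hxC hzC)
        have h2 : EMetric.diam C ≤ 2 * EMetric.diam b := by
          have h3 := ENNReal.ofReal_le_ofReal hle
          rwa [ENNReal.ofReal_toReal hCtop, ENNReal.ofReal_mul (by norm_num),
            ENNReal.ofReal_ofNat, ENNReal.ofReal_toReal (hdiambtop ⟨b, hbu⟩)] at h3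
        rw [ENNReal.coe_mul, ENNReal.coe_ofNat,
          ENNReal.coe_toNNReal (hdiambtop ⟨b, hbu⟩)]
        exact h1.trans h2
    · -- small diameters
      intro b
      by_cases hbv : b ∈ v
      · simp only [hc, if_pos hbv]
        refine le_trans (hdiamb b).le (le_trans ?_ h5δ)
        exact le_mul_of_one_le_left zero_le (by norm_num)
      · simp only [hc, if_neg hbv]
        refine le_trans (Metric.ediam_cthickening_le _) ?_
        rw [ENNReal.coe_mul, ENNReal.coe_ofNat, ENNReal.coe_toNNReal (hdiambtop b)]
        calc EMetric.diam (b : Set E) + 2 * (2 * EMetric.diam (b : Set E))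
            = 5 * EMetric.diam (b : Set E) := by ring
          _ ≤ 5 * δ := by gcongr; exact (hdiamb b).le
          _ ≤ r := h5δ
    · -- sum of diameters
      have hterm : ∀ b : ↥u, EMetric.diam (c b) ≤ EMetric.diam (b : Set E) +
          Set.indicator {x : ↥u | x ∉ v}
            (fun b : ↥u => 4 * EMetric.diam (b : Set E)) b := by
        intro b
        by_cases hbv : b ∈ v
        · rw [Set.indicator_of_notMem (show b ∉ {x : ↥u | x ∉ v} from fun hb => hb hbv)]
          simp only [hc, if_pos hbv, add_zero, le_refl]
        · rw [Set.indicator_of_mem (show b ∈ {x : ↥u | x ∉ v} from hbv)]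
          simp only [hc, if_neg hbv]
          refine le_trans (Metric.ediam_cthickening_le _) ?_
          rw [ENNReal.coe_mul, ENNReal.coe_ofNat, ENNReal.coe_toNNReal (hdiambtop b)]
          exact le_of_eq (by rw [show EMetric.diam (b : Set E) = Metric.ediam (b : Set E) from rfl]; ring)
      calc ∑' b : ↥u, EMetric.diam (c b)
          ≤ ∑' b : ↥u, (EMetric.diam (b : Set E) +
            Set.indicator {x : ↥u | x ∉ v}
              (fun b : ↥u => 4 * EMetric.diam (b : Set E)) b) :=
            ENNReal.tsum_le_tsum hterm
        _ = (∑' b : ↥u, EMetric.diam (b : Set E)) +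
            ∑' b : ↥u, Set.indicator {x : ↥u | x ∉ v}
              (fun b : ↥u => 4 * EMetric.diam (b : Set E)) b := ENNReal.tsum_add
        _ ≤ μ U / t' + ε / 2 / t' := by
            gcongr
            calc ∑' b : ↥u, Set.indicator {x : ↥u | x ∉ v}
                    (fun b : ↥u => 4 * EMetric.diam (b : Set E)) b
                  = ∑' b : {x : ↥u | x ∉ v}, 4 * EMetric.diam (((b : ↥u)) : Set E) :=
                    (tsum_subtype _ _).symm
                _ = 4 * ∑' b : {x : ↥u // x ∉ v}, EMetric.diam (((b : ↥u)) : Set E) :=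
                    ENNReal.tsum_mul_left
                _ ≤ 4 * ε₀ := mul_le_mul_right hv.le 4
                _ ≤ ε / 2 / t' := by rw [hε₀def]; exact ENNReal.mul_div_le
        _ ≤ (μ A + ε) / t' := by
            rw [ENNReal.div_add_div_same]
            refine ENNReal.div_le_div_right ?_ _
            calc μ U + ε / 2 ≤ (μ A + ε / 2) + ε / 2 := add_le_add hUμ.le le_rfl
              _ = μ A + ε := by rw [add_assoc, ENNReal.add_halves]
  -- wrap up
  have key2 : ∀ t' : ℝ≥0∞, 0 < t' → t' < t → t' * μH[1] A ≤ μ A := by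
    intro t' h0 hlt
    refine ENNReal.le_of_forall_pos_le_add fun ε hε hμ => ?_
    calc t' * μH[1] A ≤ t' * ((μ A + ε) / t') := by
          gcongr
          exact key t' h0 hlt ε (by exact_mod_cast hε)
      _ ≤ μ A + ε := ENNReal.mul_div_le
  by_cases hHtop : μH[1] A = ∞
  · exfalso
    have h2 : 0 < t / 2 := ENNReal.half_pos ht0.ne'
    have h3 := key2 (t / 2) h2 (ENNReal.half_lt_self ht0.ne' htop)
    rw [hHtop, ENNReal.mul_top h2.ne'] at h3
    exact hμA (top_le_iff.1 h3)
  by_cases hH0 : μH[1] A = 0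
  · simp [hH0]
  have hlt : t ≤ μ A / μH[1] A := by
    by_contra hcon
    push_neg at hcon
    obtain ⟨t', h1, h2⟩ := exists_between hcon
    have h0 : 0 < t' := lt_of_le_of_lt zero_le h1
    have h3 := key2 t' h0 h2
    rw [← ENNReal.le_div_iff_mul_le (Or.inl hH0) (Or.inl hHtop)] at h3
    exact absurd h3 (not_le.2 h1)
  calc t * μH[1] A ≤ μ A / μH[1] A * μH[1] A := by gcongr
    _ = μH[1] A * (μ A / μH[1] A) := mul_comm _ _
    _ ≤ μ A := ENNReal.mul_div_le
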